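/- Let k be a field and let S be a normal integral scheme over k. Let V and Ṽ be S-schemes and let v : Ṽ → V be a finite S-morphism. Let h : S → V be a section of the structural morphism V → S. Suppose there is a nonempty open subscheme S' of S such that the restriction h' of h to S' lifts through v, i.e. there is an S-morphism h̃' : S' → Ṽ with v ∘ h̃' = h'. Then h̃' extends uniquely to an S-morphism h̃ : S → Ṽ satisfying v ∘ h̃ = h (and h̃|_{S'} = h̃'). -/

import Mathlib

open AlgebraicGeometry CategoryTheory CategoryTheory.Limits TopologicalSpace

section Aux

universe u

/-- Lift a ring hom through an injective ring hom whose range contains the image. -/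
lemma stmt2_exists_ringHom_lift {B A K : CommRingCat.{u}} (σ : A ⟶ K)
    (hσ : Function.Injective σ) (ψ : B ⟶ K) (H : ∀ b, ∃ a, σ a = ψ b) :
    ∃ ψ' : B ⟶ A, ψ' ≫ σ = ψ := by
  choose g hg using H
  have key : ∀ x, σ (g x) = ψ x := hg
  refine ⟨CommRingCat.ofHom ({ toFun := g
                               map_one' := hσ (by rw [key, map_one, map_one])
                               map_mul' := fun x y => hσ (by rw [key, map_mul, map_mul, key, key])
                               map_zero' := hσ (by rw [key, map_zero, map_zero])
                               map_add' := fun x y => hσ (by rw [key, map_add, map_add, key, key]) }), ?_⟩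
  ext b
  exact key b

lemma stmt2_isDominant_fromSpecStalk {S : Scheme.{u}} [IsIntegral S] :
    IsDominant (S.fromSpecStalk (genericPoint S)) := by
  constructor
  rw [DenseRange, dense_iff_closure_eq]
  apply Set.eq_univ_of_univ_subset
  have h1 : closure ({genericPoint S} : Set S) = Set.univ := (genericPoint_spec S).def
  rw [← h1]
  apply closure_mono
  rintro x rfl
  exact ⟨IsLocalRing.closedPoint _, Scheme.fromSpecStalk_closedPoint⟩

/-- The key local statement: a generic lift of `h` through the finite morphism `v`
extends to a lift on a neighbourhood of any point `s`. -/
lemma stmt2_exists_local_lift {S V Vt : Scheme.{u}} [IsIntegral S]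
    (hnormal : ∀ s : S, IsIntegrallyClosed (S.presheaf.stalk s))
    (v : Vt ⟶ V) [IsFinite v] (h : S ⟶ V)
    (ξ : Spec (S.functionField) ⟶ Vt)
    (hξ : ξ ≫ v = S.fromSpecStalk (genericPoint S) ≫ h) (s : S) :
    ∃ (U : S.Opens) (_ : s ∈ U) (f : U.toScheme ⟶ Vt),
      f ≫ v = U.ι ≫ h ∧
      ∃ γ : Spec (S.functionField) ⟶ U.toScheme,
        γ ≫ U.ι = S.fromSpecStalk (genericPoint S) ∧ γ ≫ f = ξ := by
  have hspec : genericPoint S ⤳ s := (genericPoint_spec S).specializes trivial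
  -- choose an affine open neighbourhood of `h s`
  obtain ⟨_, ⟨V₀ : V.Opens, hV₀ : IsAffineOpen V₀, rfl⟩, hhs, -⟩ :=
    V.isBasis_affineOpens.exists_subset_of_mem_open (Set.mem_univ (h.base s)) isOpen_univ
  have hhη : h.base (genericPoint S) ∈ V₀ :=
    (hspec.map h.continuous).mem_open V₀.2 hhs
  have hWt : IsAffineOpen (v ⁻¹ᵁ V₀) := hV₀.preimage v
  -- choose an affine open neighbourhood of `s` inside `h ⁻¹ᵁ V₀`
  obtain ⟨U₀, hU₀ : IsAffineOpen U₀, hsU₀, hU₀le⟩ :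
      ∃ U₀, IsAffineOpen U₀ ∧ s ∈ U₀ ∧ U₀ ≤ h ⁻¹ᵁ V₀ :=
    Opens.isBasis_iff_nbhd.mp S.isBasis_affineOpens (show s ∈ h ⁻¹ᵁ V₀ from hhs)
  -- `ξ` factors through the affine open `v ⁻¹ᵁ V₀`
  have hηmem : ∀ x, ξ.base x ∈ v ⁻¹ᵁ V₀ := by
    intro x
    have h1 : (S.fromSpecStalk (genericPoint S)).base x = genericPoint S := by
      have hx := @Subsingleton.elim _
        (inferInstanceAs (Subsingleton (PrimeSpectrum S.functionField))) x
        (IsLocalRing.closedPoint _)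
      rw [hx]; exact Scheme.fromSpecStalk_closedPoint
    show v (ξ x) ∈ V₀
    rw [← Scheme.Hom.comp_apply, hξ, Scheme.Hom.comp_apply, h1]
    exact hhη
  have hle : (⊤ : (Spec (S.functionField)).Opens) ≤ ξ ⁻¹ᵁ (v ⁻¹ᵁ V₀) := fun x _ => hηmem x
  set ψ : Γ(Vt, v ⁻¹ᵁ V₀) ⟶ S.functionField :=
    ξ.appLE (v ⁻¹ᵁ V₀) ⊤ hle ≫ (Scheme.ΓSpecIso (S.functionField)).hom with hψdef
  have hψSpec : Spec.map ψ ≫ hWt.fromSpec = ξ := by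
    rw [hψdef, Spec.map_comp, Category.assoc,
      IsAffineOpen.SpecMap_appLE_fromSpec ξ hWt (isAffineOpen_top _) hle,
      IsAffineOpen.fromSpec_top, Scheme.isoSpec_Spec_inv, ← Category.assoc, ← Spec.map_comp,
      Iso.inv_hom_id, Spec.map_id, Category.id_comp]
  set ρ : Γ(V, V₀) ⟶ S.presheaf.stalk s :=
    h.appLE V₀ U₀ hU₀le ≫ S.presheaf.germ U₀ s hsU₀ with hρdef
  set σ : S.presheaf.stalk s ⟶ S.functionField := S.presheaf.stalkSpecializes hspec with hσdef
  have hρS : Spec.map ρ ≫ hV₀.fromSpec = S.fromSpecStalk s ≫ h := by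
    rw [hρdef, Spec.map_comp, Category.assoc,
      IsAffineOpen.SpecMap_appLE_fromSpec h hV₀ hU₀ hU₀le, ← Category.assoc]
    rw [show Spec.map (S.presheaf.germ U₀ s hsU₀) ≫ hU₀.fromSpec = hU₀.fromSpecStalk hsU₀
      from rfl, IsAffineOpen.fromSpecStalk_eq_fromSpecStalk]
  have hcommS : Spec.map (v.appLE V₀ (v ⁻¹ᵁ V₀) le_rfl ≫ ψ) ≫ hV₀.fromSpec
      = Spec.map (ρ ≫ σ) ≫ hV₀.fromSpec := by
    rw [Spec.map_comp, Category.assoc,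
      IsAffineOpen.SpecMap_appLE_fromSpec v hV₀ hWt le_rfl, ← Category.assoc, hψSpec, hξ]
    rw [Spec.map_comp, Category.assoc, hρS, ← Category.assoc,
      Scheme.SpecMap_stalkSpecializes_fromSpecStalk hspec]
  have hcomm : v.appLE V₀ (v ⁻¹ᵁ V₀) le_rfl ≫ ψ = ρ ≫ σ := by
    apply Spec.map_injective
    exact (cancel_mono hV₀.fromSpec).mp hcommS
  -- injectivity of σ
  have hinj : Function.Injective σ := by
    have : Function.Injective (algebraMap (S.presheaf.stalk s) S.functionField) :=
      IsFractionRing.injective _ _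
    exact this
  -- module-finiteness of the map on sections
  have hfin : RingHom.Finite (v.appLE V₀ (v ⁻¹ᵁ V₀) le_rfl).hom := by
    have h2 := v.finite_app V₀ hV₀
    rwa [Scheme.Hom.app_eq_appLE] at h2
  -- every element of `ψ`'s image is integral over the stalk, hence lies in it
  have hint : ∀ b : Γ(Vt, v ⁻¹ᵁ V₀), ∃ a, σ a = ψ b := by
    intro b
    obtain ⟨p, hp, hp0⟩ := hfin.to_isIntegral b
    have h2 : Polynomial.eval₂ (σ.hom.comp ρ.hom) (ψ b) p = 0 := by
      have h3 := congrArg ψ hp0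
      rw [Polynomial.hom_eval₂, map_zero] at h3
      rw [show σ.hom.comp ρ.hom = (ρ ≫ σ).hom from rfl, ← hcomm]
      exact h3
    have h4 : σ.hom.IsIntegralElem (ψ b) :=
      ⟨p.map ρ.hom, hp.map ρ.hom, by rw [Polynomial.eval₂_map]; exact h2⟩
    have h5 : IsIntegral (S.presheaf.stalk s) (ψ b) := h4
    exact (isIntegrallyClosed_iff (S.functionField)).mp (hnormal s) h5
  obtain ⟨ψ', hψ'⟩ := stmt2_exists_ringHom_lift σ hinj ψ hint
  set φ : Spec (S.presheaf.stalk s) ⟶ Vt := Spec.map ψ' ≫ hWt.fromSpec with hφdef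
  have h5 : v.appLE V₀ (v ⁻¹ᵁ V₀) le_rfl ≫ ψ' = ρ := by
    have hmono : Mono σ := ConcreteCategory.mono_of_injective σ hinj
    rw [← cancel_mono σ, Category.assoc, hψ', hcomm]
  have hφv : φ ≫ v = S.fromSpecStalk s ≫ h := by
    rw [hφdef, Category.assoc, ← IsAffineOpen.SpecMap_appLE_fromSpec v hV₀ hWt le_rfl,
      ← Category.assoc, ← Spec.map_comp, h5, hρS]
  have hφξ : Spec.map σ ≫ φ = ξ := by
    rw [hφdef, ← Category.assoc, ← Spec.map_comp, hψ', hψSpec]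
  obtain ⟨U, hxU, g, hg1, hg2⟩ := spread_out_of_isGermInjective' h v φ hφv
  refine ⟨U, hxU, g, hg2, Spec.map σ ≫ U.fromSpecStalkOfMem s hxU, ?_, ?_⟩
  · rw [Category.assoc, Scheme.Opens.fromSpecStalkOfMem_ι,
      Scheme.SpecMap_stalkSpecializes_fromSpecStalk hspec]
  · rw [Category.assoc, ← hg1]
    exact hφξ

end Aux

theorem stmt2 (k : Type) [Field k] (S : Scheme)
    (structS : S ⟶ Spec (CommRingCat.of k))
    [IsIntegral S]
    (hnormal : ∀ s : S, IsIntegrallyClosed (S.presheaf.stalk s))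
    (V Vt : Scheme) (pV : V ⟶ S) (pVt : Vt ⟶ S)
    (v : Vt ⟶ V) [IsFinite v] (hv : v ≫ pV = pVt)
    (h : S ⟶ V) (hsec : h ≫ pV = 𝟙 S)
    (S' : S.Opens) (hS' : (S' : Set S).Nonempty)
    (ht' : S'.toScheme ⟶ Vt) (hlift : ht' ≫ v = S'.ι ≫ h) :
    ∃! ht : S ⟶ Vt, ht ≫ v = h ∧ S'.ι ≫ ht = ht' := by
  haveI : IsSeparated v := IsSeparated.of_isAffineHom v
  set η := genericPoint S with hη
  have hηS' : η ∈ S' := ((genericPoint_spec S).mem_open_set_iff S'.2).mpr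
    (by simpa using hS')
  set ξ : Spec (S.functionField) ⟶ Vt := S'.fromSpecStalkOfMem η hηS' ≫ ht' with hξdef
  have hξv : ξ ≫ v = S.fromSpecStalk η ≫ h := by
    rw [hξdef, Category.assoc, hlift, ← Category.assoc, Scheme.Opens.fromSpecStalkOfMem_ι]
  have H := fun s : S => stmt2_exists_local_lift hnormal v h ξ hξv s
  choose U hsU f hfv γ hγι hγf using H
  -- the open cover
  let 𝒰 : S.OpenCover :=
    Scheme.Cover.mkOfCovers S (fun s => (U s).toScheme) (fun s => (U s).ι)
      (fun s => ⟨s, ⟨s, hsU s⟩, rfl⟩)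
  have compat : ∀ a b : S, pullback.fst ((U a).ι) ((U b).ι) ≫ f a =
      pullback.snd ((U a).ι) ((U b).ι) ≫ f b := by
    intro a b
    haveI : IsReduced (pullback ((U a).ι) ((U b).ι)) :=
      isReduced_of_isOpenImmersion (pullback.fst ((U a).ι) ((U b).ι))
    have hlift : γ a ≫ (U a).ι = γ b ≫ (U b).ι := by rw [hγι a, hγι b]
    set ι := pullback.lift (γ a) (γ b) hlift with hι
    haveI : IsDominant (ι ≫ (pullback.fst ((U a).ι) ((U b).ι) ≫ (U a).ι)) := by
      rw [← Category.assoc, hι, pullback.lift_fst, hγι a]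
      exact stmt2_isDominant_fromSpecStalk
    haveI : IsDominant ι :=
      IsDominant.of_comp_of_isOpenImmersion
        (g := pullback.fst ((U a).ι) ((U b).ι) ≫ (U a).ι) ι
    apply ext_of_isDominant_of_isSeparated v ?_ ι ?_
    · rw [Category.assoc, hfv a, Category.assoc, hfv b, ← Category.assoc,
        pullback.condition, Category.assoc]
    · rw [← Category.assoc, hι, pullback.lift_fst, ← Category.assoc, pullback.lift_snd,
        hγf a, hγf b]
  set ht : S ⟶ Vt := 𝒰.glueMorphisms f compat with hhtdef
  have hglue : ∀ s : S, (U s).ι ≫ ht = f s := fun s => 𝒰.ι_glueMorphisms f compat s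
  have htv : ht ≫ v = h := by
    apply 𝒰.hom_ext
    intro s
    show (U s).ι ≫ ht ≫ v = (U s).ι ≫ h
    rw [← Category.assoc, hglue s, hfv s]
  have hgen : S.fromSpecStalk η ≫ ht = ξ := by
    rw [← hγι η, Category.assoc, hglue η, hγf η]
  have hrestrict : S'.ι ≫ ht = ht' := by
    haveI : IsDominant (S'.fromSpecStalkOfMem η hηS' ≫ S'.ι) := by
      rw [Scheme.Opens.fromSpecStalkOfMem_ι]
      exact stmt2_isDominant_fromSpecStalk
    haveI : IsDominant (S'.fromSpecStalkOfMem η hηS') :=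
      IsDominant.of_comp_of_isOpenImmersion (g := S'.ι) _
    apply ext_of_isDominant_of_isSeparated v ?_ (S'.fromSpecStalkOfMem η hηS') ?_
    · rw [Category.assoc, htv, hlift]
    · rw [← Category.assoc, Scheme.Opens.fromSpecStalkOfMem_ι, hgen, hξdef]
  refine ⟨ht, ⟨htv, hrestrict⟩, ?_⟩
  rintro g ⟨hg1, hg2⟩
  haveI : IsDominant S'.ι := AlgebraicGeometry.Opens.isDominant_ι (S'.2.dense (by simpa using hS'))
  exact ext_of_isDominant_of_isSeparated v (hg1.trans htv.symm) S'.ι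
    (hg2.trans hrestrict.symm)
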